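/- If G is a finite simple graph of order n and size m without isolated vertices, then the total restrained domination number satisfies γ_t^r(G) ≥ 3n/2 − m. -/
import Mathlib


open Finset

/-- A set `S` of vertices is a `(k,k',k'')`-dominating set if every vertex in `S` has at
least `k` neighbors in `S`, and every vertex not in `S` has at least `k'` neighbors in `S`
and at least `k''` neighbors outside `S`. -/
def SimpleGraph.IsKkkDomSet {V : Type*} [Fintype V] [DecidableEq V] (G : SimpleGraph V)
    [DecidableRel G.Adj] (k k' k'' : ℕ) (S : Finset V) : Prop :=
  (∀ v ∈ S, k ≤ (G.neighborFinset v ∩ S).card) ∧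
  (∀ v ∉ S, k' ≤ (G.neighborFinset v ∩ S).card ∧ k'' ≤ (G.neighborFinset v \ S).card)

/-- The `(k,k',k'')`-domination number: the minimum cardinality of a
`(k,k',k'')`-dominating set. -/
noncomputable def SimpleGraph.kkkDomNum {V : Type*} [Fintype V] [DecidableEq V]
    (G : SimpleGraph V) [DecidableRel G.Adj] (k k' k'' : ℕ) : ℕ :=
  sInf {n | ∃ S : Finset V, G.IsKkkDomSet k k' k'' S ∧ S.card = n}

lemma cross_count {V : Type*} [Fintype V] [DecidableEq V] (G : SimpleGraph V)
    [DecidableRel G.Adj] (S : Finset V) :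
    ∑ v ∈ S, (G.neighborFinset v \ S).card = ∑ v ∈ Sᶜ, (G.neighborFinset v ∩ S).card := by
  have h1 : ∀ v, G.neighborFinset v \ S = Sᶜ.filter (G.Adj v) := by
    intro v; ext w
    simp [SimpleGraph.mem_neighborFinset, Finset.mem_filter, and_comm]
  have h2 : ∀ v, G.neighborFinset v ∩ S = S.filter (G.Adj v) := by
    intro v; ext w
    simp [SimpleGraph.mem_neighborFinset, Finset.mem_filter, and_comm]
  simp only [h1, h2, Finset.card_filter]
  rw [Finset.sum_comm]
  refine Finset.sum_congr rfl fun w _ => Finset.sum_congr rfl fun v _ => ?_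
  simp [G.adj_comm]

/-- If G has no isolated vertices, then γ_t^r(G) = γ_{(1,1,1)}(G) ≥ 3n/2 − m. -/
theorem stmt_13 {V : Type*} [Fintype V] [DecidableEq V] (G : SimpleGraph V)
    [DecidableRel G.Adj] (h : ∀ v : V, 0 < G.degree v) :
    3 * (Fintype.card V : ℝ) / 2 - G.edgeFinset.card ≤ G.kkkDomNum 1 1 1 := by
  classical
  have hmem : Fintype.card V ∈
      {n | ∃ S : Finset V, G.IsKkkDomSet 1 1 1 S ∧ S.card = n} := by
    refine ⟨Finset.univ, ⟨fun v _ => ?_, fun v hv => absurd (Finset.mem_univ v) hv⟩,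
      Finset.card_univ⟩
    rw [Finset.inter_univ, G.card_neighborFinset_eq_degree]
    exact h v
  obtain ⟨S, hS, hcard⟩ := Nat.sInf_mem (Set.nonempty_of_mem hmem)
  -- key inequality over ℕ
  have hsum : ∑ v : V, G.degree v = 2 * G.edgeFinset.card :=
    G.sum_degrees_eq_twice_card_edges
  have hsplit : ∑ v ∈ S, G.degree v + ∑ v ∈ Sᶜ, G.degree v = 2 * G.edgeFinset.card := by
    rw [Finset.sum_add_sum_compl, hsum]
  have hdeg : ∀ v : V, G.degree v
      = (G.neighborFinset v ∩ S).card + (G.neighborFinset v \ S).card := by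
    intro v
    rw [Finset.card_inter_add_card_sdiff, G.card_neighborFinset_eq_degree]
  have hA : S.card ≤ ∑ v ∈ S, (G.neighborFinset v ∩ S).card := by
    calc S.card = ∑ _v ∈ S, 1 := by simp
      _ ≤ _ := Finset.sum_le_sum fun v hv => hS.1 v hv
  have hC : Sᶜ.card ≤ ∑ v ∈ Sᶜ, (G.neighborFinset v ∩ S).card := by
    calc Sᶜ.card = ∑ _v ∈ Sᶜ, 1 := by simp
      _ ≤ _ := Finset.sum_le_sum fun v hv =>
        (hS.2 v (Finset.mem_compl.mp hv)).1
  have hD : Sᶜ.card ≤ ∑ v ∈ Sᶜ, (G.neighborFinset v \ S).card := by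
    calc Sᶜ.card = ∑ _v ∈ Sᶜ, 1 := by simp
      _ ≤ _ := Finset.sum_le_sum fun v hv =>
        (hS.2 v (Finset.mem_compl.mp hv)).2
  have hB : Sᶜ.card ≤ ∑ v ∈ S, (G.neighborFinset v \ S).card := by
    rw [cross_count]; exact hC
  have hcards : S.card + Sᶜ.card = Fintype.card V := Finset.card_add_card_compl S
  have key : 3 * Fintype.card V ≤ 2 * G.edgeFinset.card + 2 * S.card := by
    have h1 : S.card + 3 * Sᶜ.card ≤ 2 * G.edgeFinset.card := by
      calc S.card + 3 * Sᶜ.card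
          ≤ (∑ v ∈ S, (G.neighborFinset v ∩ S).card
              + ∑ v ∈ S, (G.neighborFinset v \ S).card)
            + (∑ v ∈ Sᶜ, (G.neighborFinset v ∩ S).card
              + ∑ v ∈ Sᶜ, (G.neighborFinset v \ S).card) := by
            omega
        _ = 2 * G.edgeFinset.card := by
            rw [← hsplit]
            simp only [hdeg, Finset.sum_add_distrib]
    omega
  have hγ : G.kkkDomNum 1 1 1 = S.card := hcard.symm
  rw [hγ]
  have : (3:ℝ) * Fintype.card V ≤ 2 * G.edgeFinset.card + 2 * S.card := by
    exact_mod_cast key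
  linarith
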